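/- Let N ≥ M ≥ 1 and let (e_i)_{i=1}^N be a unit-norm frame for ℝ^M such that max_{1 ≤ i < j ≤ N} |⟨e_i, e_j⟩| = √((N − M)/(M(N − 1))). Then (e_i) is an equiangular tight frame: there is a constant α with |⟨e_i, e_j⟩| = α for all i ≠ j, and there is a constant A with ∑_{i=1}^N ⟨x, e_i⟩ e_i = A x for all x ∈ ℝ^M. -/

import Mathlib

open scoped InnerProductSpace
open Finset
set_option maxHeartbeats 1000000

/-- A unit-norm frame attaining equality in the Welch bound is an equiangular
tight frame. -/
theorem stmt_2 (M N : ℕ) (hM : 1 ≤ M) (hMN : M ≤ N)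
    (e : Fin N → EuclideanSpace ℝ (Fin M))
    (hnorm : ∀ i, ‖e i‖ = 1)
    (hspan : Submodule.span ℝ (Set.range e) = ⊤)
    (heq : (⨆ i : Fin N, ⨆ j : Fin N, ⨆ (_ : i < j), |(⟪e i, e j⟫_ℝ)|) =
      Real.sqrt (((N : ℝ) - M) / (M * ((N : ℝ) - 1)))) :
    (∃ α : ℝ, ∀ i j : Fin N, i ≠ j → |(⟪e i, e j⟫_ℝ)| = α) ∧
      (∃ A : ℝ, ∀ x : EuclideanSpace ℝ (Fin M),
        (∑ i : Fin N, ⟪x, e i⟫_ℝ • e i) = A • x) := by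
  classical
  have hM0 : (0:ℝ) < M := by exact_mod_cast hM
  have hMR : (1:ℝ) ≤ M := by exact_mod_cast hM
  have hNM : (M:ℝ) ≤ N := by exact_mod_cast hMN
  have hN1 : (1:ℝ) ≤ N := le_trans hMR hNM
  set r : ℝ := ((N:ℝ) - M) / (M * ((N:ℝ) - 1)) with hr
  have hr0 : 0 ≤ r := div_nonneg (by linarith) (mul_nonneg hM0.le (by linarith))
  have hinner : ∀ (x y : EuclideanSpace ℝ (Fin M)), ⟪x, y⟫_ℝ = ∑ a, x a * y a := by
    intro x y
    simp [PiLp.inner_apply, RCLike.inner_apply, mul_comm]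
  -- bound on inner products
  have hbd : ∀ i j : Fin N, i ≠ j → (⟪e i, e j⟫_ℝ)^2 ≤ r := by
    have key : ∀ i j : Fin N, i < j → |⟪e i, e j⟫_ℝ| ≤ Real.sqrt r := by
      intro i j hij
      rw [← heq]
      calc |⟪e i, e j⟫_ℝ| = ⨆ _ : i < j, |⟪e i, e j⟫_ℝ| := (ciSup_pos (p := i < j) (f := fun _ => |⟪e i, e j⟫_ℝ|) hij).symm
        _ ≤ ⨆ j' : Fin N, ⨆ _ : i < j', |⟪e i, e j'⟫_ℝ| :=
            le_ciSup (f := fun j' : Fin N => ⨆ _ : i < j', |⟪e i, e j'⟫_ℝ|)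
              (Set.Finite.bddAbove (Set.finite_range _)) j
        _ ≤ _ := le_ciSup (f := fun i : Fin N => ⨆ j : Fin N, ⨆ _ : i < j, |⟪e i, e j⟫_ℝ|)
            (Set.Finite.bddAbove (Set.finite_range _)) i
    have sq_le : ∀ i j : Fin N, i < j → (⟪e i, e j⟫_ℝ)^2 ≤ r := by
      intro i j hij
      calc (⟪e i, e j⟫_ℝ)^2 = |⟪e i, e j⟫_ℝ|^2 := (sq_abs _).symm
        _ ≤ (Real.sqrt r)^2 := pow_le_pow_left₀ (abs_nonneg _) (key i j hij) 2
        _ = r := Real.sq_sqrt hr0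
    intro i j hij
    rcases lt_or_gt_of_ne hij with h | h
    · exact sq_le i j h
    · rw [real_inner_comm]; exact sq_le j i h
  -- the frame operator matrix
  set S : Fin M → Fin M → ℝ := fun a b => ∑ i, e i a * e i b with hS
  have hdiag : ∑ a, S a a = (N:ℝ) := by
    rw [Finset.sum_comm]
    have : ∀ i : Fin N, ∑ a, e i a * e i a = 1 := by
      intro i
      have := hinner (e i) (e i)
      rw [real_inner_self_eq_norm_sq, hnorm i] at this
      simpa using this.symm
    simp [this]
  have htr2 : ∑ a, ∑ b, (S a b)^2 = ∑ i, ∑ j, (⟪e i, e j⟫_ℝ)^2 := by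
    have lhs : ∀ a b : Fin M, (S a b)^2 = ∑ i, ∑ j, (e i a * e i b) * (e j a * e j b) := by
      intro a b; rw [hS, sq, Finset.sum_mul_sum]
    have rhs : ∀ i j : Fin N, (⟪e i, e j⟫_ℝ)^2 = ∑ a, ∑ b, (e i a * e i b) * (e j a * e j b) := by
      intro i j
      rw [hinner, sq, Finset.sum_mul_sum]
      apply Finset.sum_congr rfl; intro a _
      apply Finset.sum_congr rfl; intro b _
      ring
    simp only [lhs, rhs]
    calc ∑ a, ∑ b, ∑ i, ∑ j, (e i a * e i b) * (e j a * e j b)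
        = ∑ a, ∑ i, ∑ b, ∑ j, (e i a * e i b) * (e j a * e j b) :=
          Finset.sum_congr rfl (fun a _ => Finset.sum_comm)
      _ = ∑ i, ∑ a, ∑ b, ∑ j, (e i a * e i b) * (e j a * e j b) := Finset.sum_comm
      _ = ∑ i, ∑ a, ∑ j, ∑ b, (e i a * e i b) * (e j a * e j b) :=
          Finset.sum_congr rfl (fun i _ => Finset.sum_congr rfl (fun a _ => Finset.sum_comm))
      _ = ∑ i, ∑ j, ∑ a, ∑ b, (e i a * e i b) * (e j a * e j b) :=
          Finset.sum_congr rfl (fun i _ => Finset.sum_comm)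
  -- key arithmetic identity
  have hid : (N:ℝ) + (N:ℝ) * ((N:ℝ) - 1) * r = (N:ℝ)^2 / M := by
    rcases eq_or_lt_of_le hN1 with h1 | h1
    · have hM1 : (M:ℝ) = 1 := le_antisymm (by linarith) hMR
      rw [hr, ← h1, hM1]; norm_num
    · have hne : (N:ℝ) - 1 ≠ 0 := by linarith
      rw [hr]; field_simp; ring
  -- upper bound for the trace of S²
  have hub : ∑ i, ∑ j, (⟪e i, e j⟫_ℝ)^2 ≤ (N:ℝ)^2 / M := by
    have hGii : ∀ i : Fin N, (⟪e i, e i⟫_ℝ)^2 = 1 := by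
      intro i; rw [real_inner_self_eq_norm_sq, hnorm i]; norm_num
    have step : ∀ i : Fin N, ∑ j, (⟪e i, e j⟫_ℝ)^2 ≤ 1 + ((N:ℝ) - 1) * r := by
      intro i
      rw [← Finset.add_sum_erase _ _ (Finset.mem_univ i), hGii i]
      gcongr 1 + ?_
      calc ∑ j ∈ Finset.univ.erase i, (⟪e i, e j⟫_ℝ)^2
          ≤ ∑ j ∈ Finset.univ.erase i, r := by
            apply Finset.sum_le_sum
            intro j hj
            exact hbd i j (Ne.symm (Finset.ne_of_mem_erase hj))
        _ = ((N:ℝ) - 1) * r := by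
            rw [Finset.sum_const, Finset.card_erase_of_mem (Finset.mem_univ i)]
            simp only [Finset.card_univ, Fintype.card_fin, nsmul_eq_mul]
            rw [Nat.cast_sub (le_trans hM hMN)]
            norm_num
    calc ∑ i, ∑ j, (⟪e i, e j⟫_ℝ)^2 ≤ ∑ _i : Fin N, (1 + ((N:ℝ) - 1) * r) :=
          Finset.sum_le_sum (fun i _ => step i)
      _ = (N:ℝ) + (N:ℝ) * ((N:ℝ) - 1) * r := by
          rw [Finset.sum_const]
          simp only [Finset.card_univ, Fintype.card_fin, nsmul_eq_mul]
          ring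
      _ = (N:ℝ)^2 / M := hid
  have hGii : ∀ i : Fin N, (⟪e i, e i⟫_ℝ)^2 = 1 := by
    intro i; rw [real_inner_self_eq_norm_sq, hnorm i]; norm_num
  have herase : ∀ i : Fin N, ∑ _j ∈ Finset.univ.erase i, r = ((N:ℝ) - 1) * r := by
    intro i
    rw [Finset.sum_const, Finset.card_erase_of_mem (Finset.mem_univ i)]
    simp only [Finset.card_univ, Fintype.card_fin, nsmul_eq_mul]
    rw [Nat.cast_sub (le_trans hM hMN)]
    norm_num
  have hsplit : ∑ i, ∑ j, (⟪e i, e j⟫_ℝ)^2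
      = (N:ℝ) + ∑ i, ∑ j ∈ Finset.univ.erase i, (⟪e i, e j⟫_ℝ)^2 := by
    have : ∀ i : Fin N, ∑ j, (⟪e i, e j⟫_ℝ)^2
        = 1 + ∑ j ∈ Finset.univ.erase i, (⟪e i, e j⟫_ℝ)^2 := by
      intro i
      rw [← Finset.add_sum_erase _ _ (Finset.mem_univ i), hGii i]
    rw [Finset.sum_congr rfl (fun i _ => this i), Finset.sum_add_distrib]
    simp
  -- deviation from a multiple of the identity
  set d : Fin M → Fin M → ℝ := fun a b => if a = b then (N:ℝ)/M else 0 with hd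
  have hDval : ∑ a, ∑ b, (S a b - d a b)^2
      = (∑ a, ∑ b, (S a b)^2) - (N:ℝ)^2 / M := by
    have expand : ∀ a b : Fin M, (S a b - d a b)^2
        = (S a b)^2 - 2*(S a b * d a b) + (d a b)^2 := by intro a b; ring
    have h1 : ∀ a : Fin M, ∑ b, S a b * d a b = S a a * ((N:ℝ)/M) := by
      intro a; rw [hd]; simp
    have h2 : ∀ a : Fin M, ∑ b, (d a b)^2 = ((N:ℝ)/M)^2 := by
      intro a; rw [hd]
      simp only [ite_pow]
      simp
    have h3 : ∀ a : Fin M, ∑ b, (S a b - d a b)^2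
        = (∑ b, (S a b)^2) - 2*(S a a * ((N:ℝ)/M)) + ((N:ℝ)/M)^2 := by
      intro a
      rw [Finset.sum_congr rfl (fun b _ => expand a b), Finset.sum_add_distrib,
        Finset.sum_sub_distrib, ← Finset.mul_sum, h1 a, h2 a]
    rw [Finset.sum_congr rfl (fun a _ => h3 a), Finset.sum_add_distrib,
      Finset.sum_sub_distrib, ← Finset.mul_sum, ← Finset.sum_mul, hdiag]
    rw [Finset.sum_const]
    simp only [Finset.card_univ, Fintype.card_fin, nsmul_eq_mul]
    field_simp
    ring
  have hDle : ∑ a, ∑ b, (S a b - d a b)^2 ≤ 0 := by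
    rw [hDval, htr2]; linarith [hub]
  have hDzero : ∑ a, ∑ b, (S a b - d a b)^2 = 0 :=
    le_antisymm hDle (by positivity)
  have hSd : ∀ a b : Fin M, S a b = d a b := by
    have h0 : ∀ a ∈ Finset.univ, ∑ b, (S a b - d a b)^2 = 0 := by
      rw [← Finset.sum_eq_zero_iff_of_nonneg (fun a _ => by positivity)]
      exact hDzero
    intro a b
    have h1 : ∀ b ∈ Finset.univ, (S a b - d a b)^2 = 0 := by
      rw [← Finset.sum_eq_zero_iff_of_nonneg (fun b _ => by positivity)]
      exact h0 a (Finset.mem_univ a)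
    have := h1 b (Finset.mem_univ b)
    have := pow_eq_zero_iff (n := 2) (by norm_num) |>.mp this
    linarith
  -- trace of S² equals N²/M exactly
  have htreq : ∑ i, ∑ j, (⟪e i, e j⟫_ℝ)^2 = (N:ℝ)^2 / M := by
    have : ∑ a, ∑ b, (S a b - d a b)^2 = 0 := hDzero
    rw [hDval] at this
    rw [← htr2]
    linarith
  -- pointwise equality of off-diagonal inner products
  have hpoint : ∀ i : Fin N, ∀ j ∈ Finset.univ.erase i, (⟪e i, e j⟫_ℝ)^2 = r := by
    have hsums : ∑ i, ∑ j ∈ Finset.univ.erase i, (⟪e i, e j⟫_ℝ)^2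
        = ∑ i : Fin N, ∑ _j ∈ Finset.univ.erase i, r := by
      have e1 : ∑ i : Fin N, ∑ _j ∈ Finset.univ.erase i, r = (N:ℝ) * (((N:ℝ) - 1) * r) := by
        rw [Finset.sum_congr rfl (fun i _ => herase i), Finset.sum_const]
        simp [nsmul_eq_mul]
      rw [e1]
      have := htreq
      rw [hsplit] at this
      linarith [hid]
    have le1 : ∀ i ∈ Finset.univ, ∑ j ∈ Finset.univ.erase i, (⟪e i, e j⟫_ℝ)^2
        ≤ ∑ _j ∈ Finset.univ.erase i, r := by
      intro i _
      exact Finset.sum_le_sum (fun j hj => hbd i j (Ne.symm (Finset.ne_of_mem_erase hj)))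
    have outer := (Finset.sum_eq_sum_iff_of_le le1).mp hsums
    intro i j hj
    have inner_le : ∀ j ∈ Finset.univ.erase i, (⟪e i, e j⟫_ℝ)^2 ≤ r :=
      fun j hj => hbd i j (Ne.symm (Finset.ne_of_mem_erase hj))
    exact (Finset.sum_eq_sum_iff_of_le inner_le).mp (outer i (Finset.mem_univ i)) j hj
  constructor
  · refine ⟨Real.sqrt r, fun i j hij => ?_⟩
    have hj : j ∈ Finset.univ.erase i := Finset.mem_erase.mpr ⟨Ne.symm hij, Finset.mem_univ j⟩
    rw [← Real.sqrt_sq_eq_abs, hpoint i j hj]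
  · refine ⟨(N:ℝ)/M, fun x => ?_⟩
    apply ext_inner_left ℝ
    intro y
    rw [inner_sum, real_inner_smul_right]
    have per_i : ∀ i : Fin N, ⟪y, ⟪x, e i⟫_ℝ • e i⟫_ℝ
        = ∑ a, ∑ b, (y a * e i a) * (x b * e i b) := by
      intro i
      rw [real_inner_smul_right, hinner, hinner, mul_comm, Finset.sum_mul_sum]
    calc ∑ i, ⟪y, ⟪x, e i⟫_ℝ • e i⟫_ℝ
        = ∑ i, ∑ a, ∑ b, (y a * e i a) * (x b * e i b) :=
          Finset.sum_congr rfl (fun i _ => per_i i)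
      _ = ∑ a, ∑ i, ∑ b, (y a * e i a) * (x b * e i b) := Finset.sum_comm
      _ = ∑ a, ∑ b, ∑ i, (y a * e i a) * (x b * e i b) :=
          Finset.sum_congr rfl (fun a _ => Finset.sum_comm)
      _ = ∑ a, ∑ b, (y a * x b) * S a b := by
          apply Finset.sum_congr rfl; intro a _
          apply Finset.sum_congr rfl; intro b _
          rw [hS, Finset.mul_sum]
          apply Finset.sum_congr rfl; intro i _
          ring
      _ = ∑ a, (y a * x a) * ((N:ℝ)/M) := by
          apply Finset.sum_congr rfl; intro a _
          rw [Finset.sum_congr rfl (fun b _ => by rw [hSd a b]), hd]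
          simp
      _ = (N:ℝ)/M * ⟪y, x⟫_ℝ := by
          rw [hinner y x, Finset.mul_sum]
          apply Finset.sum_congr rfl; intro a _
          ring
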